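/- Let X be a compact metric space, T : X → X a continuous map, and φ : X → ℝ a continuous function. Let m be a Borel probability measure conformal for (T, φ), let μ be a T-invariant Borel probability measure equivalent to m, and suppose the Radon–Nikodym density f = dm/dμ has a continuous version f : X → ℝ. Let A ⊆ X be a Borel set such that T restricted to A is injective, T(A) is Borel, and μ(∂A) = 0 and μ(∂(T(A))) = 0. Then for every point x ∈ X that is generic for μ, both limits lim_{n→∞} (1/n) Σ_{k=0}^{n-1} f(T^k(x)) · 1_{T(A)}(T^k(x)) and lim_{n→∞} (1/n) Σ_{k=0}^{n-1} exp(φ(T^k(x))) · f(T^k(x)) · 1_A(T^k(x)) exist and are equal, their common value being m(T(A)). -/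

import Mathlib

open MeasureTheory Filter Topology
open scoped ENNReal NNReal

/-- A Borel measure `m` is conformal for `(T, φ)` if `m(T(A)) = ∫_A e^φ dm` for every
Borel set `A` on which `T` is injective and whose image is Borel. -/
def IsConformal {X : Type*} [MeasurableSpace X]
    (T : X → X) (φ : X → ℝ) (m : Measure X) : Prop :=
  ∀ A : Set X, MeasurableSet A → Set.InjOn T A → MeasurableSet (T '' A) →
    (m (T '' A)).toReal = ∫ x in A, Real.exp (φ x) ∂m

/-- A point `x` is generic for the Borel probability measure `ν` under the map `T` if the
Birkhoff averages of every continuous function along the orbit of `x` converge to the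
integral with respect to `ν`. -/
def IsGeneric {X : Type*} [TopologicalSpace X] [MeasurableSpace X]
    (T : X → X) (ν : Measure X) (x : X) : Prop :=
  ∀ h : X → ℝ, Continuous h →
    Tendsto (fun n : ℕ => (1 / (n : ℝ)) * ∑ k ∈ Finset.range n, h (T^[k] x))
      atTop (𝓝 (∫ y, h y ∂ν))

/-- Key lemma: along the orbit of a generic point, Birkhoff averages of `g · 1_B`
converge to `∫_B g dμ`, provided `μ(∂B) = 0`. -/
lemma birkhoff_indicator {X : Type*} [MetricSpace X] [CompactSpace X] [MeasurableSpace X]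
    [BorelSpace X] (T : X → X) (μ : Measure X) [IsProbabilityMeasure μ]
    (g : X → ℝ) (hg : Continuous g)
    (B : Set X) (hB : MeasurableSet B) (hfr : μ (frontier B) = 0)
    (x : X) (hx : IsGeneric T μ x) :
    Tendsto (fun n : ℕ => (1 / (n : ℝ)) * ∑ k ∈ Finset.range n,
        g (T^[k] x) * Set.indicator B (fun _ => (1 : ℝ)) (T^[k] x))
      atTop (𝓝 (∫ y in B, g y ∂μ)) := by
  have cont_int : ∀ (h : X → ℝ), Continuous h → Integrable h μ := fun h hh =>
    integrableOn_univ.mp (hh.continuousOn.integrableOn_compact isCompact_univ)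
  -- trivial cases
  rcases B.eq_empty_or_nonempty with hBe | hBne
  · simp [hBe]
  by_cases hIu : interior B = Set.univ
  · have hBu : B = Set.univ := Set.eq_univ_of_univ_subset (hIu ▸ interior_subset)
    subst hBu
    simpa using hx g hg
  have hCne : ((interior B)ᶜ : Set X).Nonempty := by
    rw [Set.nonempty_compl]; exact hIu
  -- measure of closure and interior agree with measure of B
  have hclos : μ (closure B) = μ B := by
    refine le_antisymm ?_ (measure_mono subset_closure)
    calc μ (closure B) ≤ μ B + μ (frontier B) := by
          rw [closure_eq_self_union_frontier]; exact measure_union_le _ _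
      _ = μ B := by rw [hfr, add_zero]
  have hintr : μ (interior B) = μ B := by
    refine le_antisymm (measure_mono interior_subset) ?_
    calc μ B ≤ μ (closure B) := measure_mono subset_closure
      _ ≤ μ (interior B) + μ (frontier B) := by
          rw [closure_eq_interior_union_frontier]; exact measure_union_le _ _
      _ = μ (interior B) := by rw [hfr, add_zero]
  -- a uniform bound for g
  obtain ⟨z, -, hz⟩ := isCompact_univ.exists_isMaxOn ⟨x, Set.mem_univ x⟩
    (continuous_abs.comp hg).continuousOn
  set M := |g z| with hMdef
  have hM0 : (0:ℝ) ≤ M := abs_nonneg _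
  have hMb : ∀ y, |g y| ≤ M := fun y => hz (Set.mem_univ y)
  -- approximating sequences of continuous functions
  set v : ℕ → X → ℝ := fun n y => max 0 (1 - n * Metric.infDist y B) with hvdef
  set u : ℕ → X → ℝ := fun n y => min 1 (n * Metric.infDist y (interior B)ᶜ) with hudef
  have hvcont : ∀ n, Continuous (v n) := fun n =>
    continuous_const.max (continuous_const.sub
      (continuous_const.mul (Metric.continuous_infDist_pt B)))
  have hucont : ∀ n, Continuous (u n) := fun n =>
    continuous_const.min (continuous_const.mul (Metric.continuous_infDist_pt _))
  have hv0 : ∀ n y, 0 ≤ v n y := fun n y => le_max_left _ _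
  have hv1 : ∀ n y, v n y ≤ 1 := fun n y => by
    have h1 : (0:ℝ) ≤ Metric.infDist y B := Metric.infDist_nonneg
    have h2 : (0:ℝ) ≤ (n:ℝ) * Metric.infDist y B := by positivity
    simp only [hvdef]; rw [max_le_iff]; constructor <;> linarith
  have hu0 : ∀ n y, 0 ≤ u n y := fun n y => by
    have h1 : (0:ℝ) ≤ Metric.infDist y (interior B)ᶜ := Metric.infDist_nonneg
    have h2 : (0:ℝ) ≤ (n:ℝ) * Metric.infDist y (interior B)ᶜ := by positivity
    simp only [hudef]; rw [le_min_iff]; constructor <;> linarith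
  have hu1 : ∀ n y, u n y ≤ 1 := fun n y => min_le_left _ _
  have hiv : ∀ n y, Set.indicator B (fun _ => (1:ℝ)) y ≤ v n y := by
    intro n y
    by_cases hy : y ∈ B
    · rw [Set.indicator_of_mem hy]
      have : Metric.infDist y B = 0 := Metric.infDist_zero_of_mem hy
      simp [hvdef, this]
    · rw [Set.indicator_of_notMem hy]; exact hv0 n y
  have hui : ∀ n y, u n y ≤ Set.indicator B (fun _ => (1:ℝ)) y := by
    intro n y
    by_cases hy : y ∈ interior B
    · rw [Set.indicator_of_mem (interior_subset hy)]; exact hu1 n y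
    · have hd : Metric.infDist y (interior B)ᶜ = 0 :=
        Metric.infDist_zero_of_mem (by simpa using hy)
      have hind : (0:ℝ) ≤ Set.indicator B (fun _ => (1:ℝ)) y :=
        Set.indicator_nonneg (fun _ _ => zero_le_one) y
      simp only [hudef, hd, mul_zero]
      rw [min_def]
      split <;> linarith
  have huv : ∀ n y, u n y ≤ v n y := fun n y => (hui n y).trans (hiv n y)
  -- pointwise limits of the approximating sequences
  have hvptw : ∀ y, Tendsto (fun n => v n y) atTop
      (𝓝 (Set.indicator (closure B) (fun _ => (1:ℝ)) y)) := by
    intro y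
    by_cases hy : y ∈ closure B
    · have hd : Metric.infDist y B = 0 := Metric.infDist_zero_of_mem_closure hy
      rw [Set.indicator_of_mem hy]
      simp [hvdef, hd]
    · have hd : 0 < Metric.infDist y B := by
        rcases lt_or_eq_of_le (Metric.infDist_nonneg (x := y) (s := B)) with h | h
        · exact h
        · exact absurd ((Metric.mem_closure_iff_infDist_zero hBne).2 h.symm) hy
      rw [Set.indicator_of_notMem hy]
      have hev : ∀ᶠ n : ℕ in atTop, v n y = 0 := by
        filter_upwards [eventually_ge_atTop ⌈(Metric.infDist y B)⁻¹⌉₊] with n hn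
        have h1 : ((Metric.infDist y B)⁻¹ : ℝ) ≤ n :=
          le_trans (Nat.le_ceil _) (by exact_mod_cast hn)
        have h2 : (1:ℝ) ≤ n * Metric.infDist y B :=
          calc (1:ℝ) = (Metric.infDist y B)⁻¹ * Metric.infDist y B :=
                (inv_mul_cancel₀ hd.ne').symm
            _ ≤ n * Metric.infDist y B := mul_le_mul_of_nonneg_right h1 hd.le
        simp [hvdef, max_eq_left, sub_nonpos.2 h2]
      exact Tendsto.congr' (hev.mono fun n h => h.symm) tendsto_const_nhds
  have huptw : ∀ y, Tendsto (fun n => u n y) atTop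
      (𝓝 (Set.indicator (interior B) (fun _ => (1:ℝ)) y)) := by
    intro y
    by_cases hy : y ∈ interior B
    · have hd : 0 < Metric.infDist y (interior B)ᶜ := by
        rcases lt_or_eq_of_le (Metric.infDist_nonneg (x := y) (s := (interior B)ᶜ)) with h | h
        · exact h
        · exfalso
          have hmem : y ∈ closure ((interior B)ᶜ : Set X) :=
            (Metric.mem_closure_iff_infDist_zero hCne).2 h.symm
          rw [(isClosed_compl_iff.2 isOpen_interior).closure_eq] at hmem
          exact hmem hy
      rw [Set.indicator_of_mem hy]
      have hev : ∀ᶠ n : ℕ in atTop, u n y = 1 := by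
        filter_upwards [eventually_ge_atTop ⌈(Metric.infDist y (interior B)ᶜ)⁻¹⌉₊] with n hn
        have h1 : ((Metric.infDist y (interior B)ᶜ)⁻¹ : ℝ) ≤ n :=
          le_trans (Nat.le_ceil _) (by exact_mod_cast hn)
        have h2 : (1:ℝ) ≤ n * Metric.infDist y (interior B)ᶜ :=
          calc (1:ℝ) = (Metric.infDist y (interior B)ᶜ)⁻¹ * Metric.infDist y (interior B)ᶜ :=
                (inv_mul_cancel₀ hd.ne').symm
            _ ≤ n * Metric.infDist y (interior B)ᶜ := mul_le_mul_of_nonneg_right h1 hd.le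
        simp [hudef, min_eq_left h2]
      exact Tendsto.congr' (hev.mono fun n h => h.symm) tendsto_const_nhds
    · have hd : Metric.infDist y (interior B)ᶜ = 0 :=
        Metric.infDist_zero_of_mem (by simpa using hy)
      rw [Set.indicator_of_notMem hy]
      simp [hudef, hd]
  -- integral limits via dominated convergence
  have hvint : Tendsto (fun n => ∫ y, v n y ∂μ) atTop (𝓝 ((μ B).toReal)) := by
    have h := tendsto_integral_of_dominated_convergence (F := v) (μ := μ)
      (bound := fun _ => (1:ℝ))
      (fun n => (hvcont n).aestronglyMeasurable) (integrable_const 1)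
      (fun n => Filter.Eventually.of_forall fun y => by
        rw [Real.norm_eq_abs, abs_of_nonneg (hv0 n y)]; exact hv1 n y)
      (Filter.Eventually.of_forall hvptw)
    rwa [show (fun _ : X => (1:ℝ)) = (1 : X → ℝ) from rfl,
      integral_indicator_one measurableSet_closure, measureReal_def, hclos] at h
  have huint : Tendsto (fun n => ∫ y, u n y ∂μ) atTop (𝓝 ((μ B).toReal)) := by
    have h := tendsto_integral_of_dominated_convergence (F := u) (μ := μ)
      (bound := fun _ => (1:ℝ))
      (fun n => (hucont n).aestronglyMeasurable) (integrable_const 1)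
      (fun n => Filter.Eventually.of_forall fun y => by
        rw [Real.norm_eq_abs, abs_of_nonneg (hu0 n y)]; exact hu1 n y)
      (Filter.Eventually.of_forall huptw)
    rwa [show (fun _ : X => (1:ℝ)) = (1 : X → ℝ) from rfl,
      integral_indicator_one measurableSet_interior, measureReal_def, hintr] at h
  -- the main estimate
  rw [Metric.tendsto_atTop]
  intro ε hε
  set δ := ε / (2 * (M + 1)) with hδdef
  have hδ0 : 0 < δ := by positivity
  have hdiff : Tendsto (fun n => ∫ y, v n y ∂μ - ∫ y, u n y ∂μ) atTop (𝓝 0) := by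
    simpa using hvint.sub huint
  obtain ⟨n₀, hn₀⟩ := (hdiff.eventually_lt_const hδ0).exists
  set V := v n₀ with hVdef
  set U := u n₀ with hUdef
  have hVc : Continuous V := hvcont n₀
  have hUc : Continuous U := hucont n₀
  have hVgc : Continuous (fun y => V y * g y) := hVc.mul hg
  have hVUc : Continuous (fun y => V y - U y) := hVc.sub hUc
  have hI : ∫ y, (V y - U y) ∂μ < δ := by
    rwa [integral_sub (cont_int V hVc) (cont_int U hUc)]
  -- pointwise estimate
  have hptw : ∀ y, |g y * Set.indicator B (fun _ => (1:ℝ)) y - V y * g y|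
      ≤ M * (V y - U y) := by
    intro y
    have h1 : g y * Set.indicator B (fun _ => (1:ℝ)) y - V y * g y
        = (Set.indicator B (fun _ => (1:ℝ)) y - V y) * g y := by ring
    rw [h1, abs_mul]
    have h2 : |Set.indicator B (fun _ => (1:ℝ)) y - V y| ≤ V y - U y := by
      rw [abs_sub_comm, abs_of_nonneg (sub_nonneg.2 (hiv n₀ y))]
      have := hui n₀ y
      linarith
    calc |Set.indicator B (fun _ => (1:ℝ)) y - V y| * |g y|
        ≤ (V y - U y) * M := by
          apply mul_le_mul h2 (hMb y) (abs_nonneg _)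
          have := huv n₀ y; linarith
      _ = M * (V y - U y) := by ring
  -- Birkhoff averages of the continuous approximations
  have hBVg := hx (fun y => V y * g y) hVgc
  have hBVU := hx (fun y => V y - U y) hVUc
  have hev2 : ∀ᶠ n : ℕ in atTop,
      (1 / (n : ℝ)) * ∑ k ∈ Finset.range n, (V (T^[k] x) - U (T^[k] x)) < δ :=
    hBVU.eventually_lt_const hI
  rw [Metric.tendsto_atTop] at hBVg
  obtain ⟨N1, hN1⟩ := hBVg δ hδ0
  obtain ⟨N2, hN2⟩ := eventually_atTop.mp hev2
  refine ⟨max N1 N2, fun n hn => ?_⟩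
  have hn1 := hN1 n (le_trans (le_max_left _ _) hn)
  have hn2 := hN2 n (le_trans (le_max_right _ _) hn)
  set S1 := (1 / (n : ℝ)) * ∑ k ∈ Finset.range n,
    g (T^[k] x) * Set.indicator B (fun _ => (1:ℝ)) (T^[k] x) with hS1
  set S2 := (1 / (n : ℝ)) * ∑ k ∈ Finset.range n, (V (T^[k] x) * g (T^[k] x)) with hS2
  set S3 := (1 / (n : ℝ)) * ∑ k ∈ Finset.range n, (V (T^[k] x) - U (T^[k] x)) with hS3
  have hn0 : (0:ℝ) ≤ 1 / (n : ℝ) := by positivity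
  -- |S1 - S2| ≤ M * S3
  have hS12 : |S1 - S2| ≤ M * S3 := by
    rw [hS1, hS2, hS3, ← mul_sub, ← Finset.sum_sub_distrib, abs_mul, abs_of_nonneg hn0]
    calc (1 / (n : ℝ)) * |∑ k ∈ Finset.range n,
          (g (T^[k] x) * Set.indicator B (fun _ => (1:ℝ)) (T^[k] x)
            - V (T^[k] x) * g (T^[k] x))|
        ≤ (1 / (n : ℝ)) * ∑ k ∈ Finset.range n, (M * (V (T^[k] x) - U (T^[k] x))) := by
          apply mul_le_mul_of_nonneg_left _ hn0
          exact (Finset.abs_sum_le_sum_abs _ _).trans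
            (Finset.sum_le_sum fun k _ => hptw (T^[k] x))
      _ = M * ((1 / (n : ℝ)) * ∑ k ∈ Finset.range n, (V (T^[k] x) - U (T^[k] x))) := by
          rw [← Finset.mul_sum]; ring
  have hS3le : S3 < δ := hn2
  have hS3nn : 0 ≤ S3 := by
    rw [hS3]
    apply mul_nonneg hn0
    apply Finset.sum_nonneg
    intro k _
    have := huv n₀ (T^[k] x); linarith
  -- |∫ V g - ∫_B g| ≤ M * ∫ (V - U) ≤ M * δ
  have hint_ind : Integrable (fun y => g y * Set.indicator B (fun _ => (1:ℝ)) y) μ := by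
    have : (fun y => g y * Set.indicator B (fun _ => (1:ℝ)) y)
        = Set.indicator B g := by
      funext y; by_cases hy : y ∈ B <;> simp [hy]
    rw [this]
    exact (cont_int g hg).indicator hB
  have hintdiff : |(∫ y, V y * g y ∂μ) - ∫ y in B, g y ∂μ| ≤ M * δ := by
    have heq : ∫ y in B, g y ∂μ = ∫ y, g y * Set.indicator B (fun _ => (1:ℝ)) y ∂μ := by
      rw [show (fun y => g y * Set.indicator B (fun _ => (1:ℝ)) y) = Set.indicator B g from
        funext fun y => by by_cases hy : y ∈ B <;> simp [hy]]
      rw [integral_indicator hB]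
    rw [heq, ← integral_sub (cont_int _ hVgc) hint_ind]
    calc |∫ y, (V y * g y - g y * Set.indicator B (fun _ => (1:ℝ)) y) ∂μ|
        ≤ ∫ y, |V y * g y - g y * Set.indicator B (fun _ => (1:ℝ)) y| ∂μ :=
          by
          have hni := norm_integral_le_integral_norm (μ := μ)
            (fun y => V y * g y - g y * Set.indicator B (fun _ => (1:ℝ)) y)
          simpa [Real.norm_eq_abs] using hni
      _ ≤ ∫ y, M * (V y - U y) ∂μ := by
          apply integral_mono_of_nonneg (Filter.Eventually.of_forall fun y => abs_nonneg _)
            ((cont_int _ hVUc).const_mul M)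
          refine Filter.Eventually.of_forall fun y => ?_
          show |V y * g y - g y * Set.indicator B (fun _ => (1:ℝ)) y| ≤ M * (V y - U y)
          rw [abs_sub_comm]
          exact hptw y
      _ = M * ∫ y, (V y - U y) ∂μ := integral_const_mul M _
      _ ≤ M * δ := mul_le_mul_of_nonneg_left hI.le hM0
  -- combine
  have habs : |S1 - ∫ y in B, g y ∂μ| < ε := by
    have h1 : |S1 - S2| ≤ M * δ := hS12.trans (by nlinarith)
    have h2 : |S2 - ∫ y, V y * g y ∂μ| < δ := by
      rw [← Real.dist_eq]; exact hn1
    have key : |S1 - ∫ y in B, g y ∂μ|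
        ≤ |S1 - S2| + |S2 - ∫ y, V y * g y ∂μ|
          + |(∫ y, V y * g y ∂μ) - ∫ y in B, g y ∂μ| := by
      have := abs_sub_le S1 S2 (∫ y in B, g y ∂μ)
      have := abs_sub_le S2 (∫ y, V y * g y ∂μ) (∫ y in B, g y ∂μ)
      linarith [abs_sub_le S1 S2 (∫ y in B, g y ∂μ),
        abs_sub_le S2 (∫ y, V y * g y ∂μ) (∫ y in B, g y ∂μ)]
    have hδε : (2 * M + 1) * δ < ε := by
      rw [hδdef]
      rw [div_eq_inv_mul]
      have h2M : (2 * M + 1) < 2 * (M + 1) := by linarith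
      calc (2 * M + 1) * ((2 * (M + 1))⁻¹ * ε)
          < (2 * (M + 1)) * ((2 * (M + 1))⁻¹ * ε) := by
            apply mul_lt_mul_of_pos_right h2M
            positivity
        _ = ε := by field_simp
    calc |S1 - ∫ y in B, g y ∂μ|
        ≤ |S1 - S2| + |S2 - ∫ y, V y * g y ∂μ|
          + |(∫ y, V y * g y ∂μ) - ∫ y in B, g y ∂μ| := key
      _ < M * δ + δ + M * δ := by
        apply add_lt_add_of_lt_of_le (add_lt_add_of_le_of_lt h1 h2) hintdiff
      _ ≤ (2 * M + 1) * δ := by ring_nf; linarith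
      _ < ε := hδε
  rw [Real.dist_eq]
  exact habs

/-- For a conformal measure `m` with continuous density `f = dm/dμ` with respect to the
invariant measure `μ`, and a Borel set `A` (with `T` injective on `A`, `T(A)` Borel, and
`∂A`, `∂T(A)` of `μ`-measure zero), along the orbit of any `μ`-generic point the Birkhoff
averages of `f·1_{T(A)}` and of `e^φ·f·1_A` both converge to `m(T(A))`. -/
theorem fundamental_equation_along_generic_orbit
    {X : Type*} [MetricSpace X] [CompactSpace X] [MeasurableSpace X] [BorelSpace X]
    (T : X → X) (hT : Continuous T) (φ : X → ℝ) (hφ : Continuous φ)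
    (m μ : Measure X) [IsProbabilityMeasure m] [IsProbabilityMeasure μ]
    (hm : IsConformal T φ m)
    (hμinv : ∀ E : Set X, MeasurableSet E → μ (T ⁻¹' E) = μ E)
    (hequiv : μ ≪ m ∧ m ≪ μ)
    (f : X → ℝ) (hf : Continuous f)
    (hdens : ∀ E : Set X, MeasurableSet E → m E = ∫⁻ x in E, ENNReal.ofReal (f x) ∂μ)
    (A : Set X) (hA : MeasurableSet A) (hinj : Set.InjOn T A)
    (hTA : MeasurableSet (T '' A))
    (hfrA : μ (frontier A) = 0) (hfrTA : μ (frontier (T '' A)) = 0) :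
    ∀ x : X, IsGeneric T μ x →
      Tendsto (fun n : ℕ => (1 / (n : ℝ)) * ∑ k ∈ Finset.range n,
          f (T^[k] x) * Set.indicator (T '' A) (fun _ => (1 : ℝ)) (T^[k] x))
        atTop (𝓝 (m (T '' A)).toReal) ∧
      Tendsto (fun n : ℕ => (1 / (n : ℝ)) * ∑ k ∈ Finset.range n,
          Real.exp (φ (T^[k] x)) * f (T^[k] x)
            * Set.indicator A (fun _ => (1 : ℝ)) (T^[k] x))
        atTop (𝓝 (m (T '' A)).toReal) := by
  intro x hx
  -- f is nonnegative μ-a.e.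
  have hfae : 0 ≤ᵐ[μ] f := by
    have hNm : MeasurableSet {y | f y < 0} := measurableSet_lt hf.measurable measurable_const
    have hmN : m {y | f y < 0} = 0 := by
      rw [hdens _ hNm]
      have hcg : ∀ᵐ y ∂μ, y ∈ {y | f y < 0} → ENNReal.ofReal (f y) = (fun _ => (0:ℝ≥0∞)) y :=
        Filter.Eventually.of_forall fun y hy => ENNReal.ofReal_eq_zero.2 (le_of_lt hy)
      rw [setLIntegral_congr_fun hNm (fun y hy => ENNReal.ofReal_eq_zero.2 (le_of_lt hy)), lintegral_zero]
    have hμN : μ {y | f y < 0} = 0 := hequiv.1 hmN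
    have : ∀ᵐ y ∂μ, ¬ f y < 0 := by
      rw [ae_iff]; simpa using hμN
    filter_upwards [this] with y hy
    exact not_lt.mp hy
  -- the limit of the first average equals (m (T '' A)).toReal
  have hval1 : ∫ y in T '' A, f y ∂μ = (m (T '' A)).toReal := by
    rw [integral_eq_lintegral_of_nonneg_ae (ae_restrict_of_ae hfae)
      hf.aestronglyMeasurable.restrict, ← hdens _ hTA]
  -- the limit of the second average equals (m (T '' A)).toReal
  have hmeq : m = μ.withDensity (fun y => ((f y).toNNReal : ℝ≥0∞)) := by
    ext E hE
    rw [hdens E hE, withDensity_apply _ hE]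
    rfl
  have hval2 : ∫ y in A, Real.exp (φ y) * f y ∂μ = (m (T '' A)).toReal := by
    rw [hm A hA hinj hTA, hmeq, MeasureTheory.restrict_withDensity hA,
      integral_withDensity_eq_integral_smul hf.measurable.real_toNNReal]
    apply integral_congr_ae
    filter_upwards [ae_restrict_of_ae hfae] with y hy
    rw [NNReal.smul_def, smul_eq_mul, Real.coe_toNNReal _ hy]
    ring
  constructor
  · have := birkhoff_indicator T μ f hf (T '' A) hTA hfrTA x hx
    rwa [hval1] at this
  · have := birkhoff_indicator T μ (fun y => Real.exp (φ y) * f y)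
      ((Real.continuous_exp.comp hφ).mul hf) A hA hfrA x hx
    rwa [hval2] at this
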